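/- Let a > 0, b > 0, c ∈ ℝ with b²/4 < c, let k₀, k₁ ∈ ℝ with k₀² + k₁² > 0 and k₀k₁ ≤ 0, and let λ₁(p) = −b/2 − √(b²/4 − c − ap) on ℂ⁺ with the branch Re √ ≥ 0. For G ∈ H² with pG(p) ∈ H², define U(x,p) = e^{λ₁(p)x}(k₀ + k₁λ₁(p))⁻¹G(p). Then there is a constant C₁ = C₁(a,b,c,k₀,k₁) such that for m = 0 and m = 1: (∫₀^∞ ‖p^m U(x,·)‖²_{H²} dx)^{1/2} ≤ C₁ ‖p^m G(p)‖_{H²}. -/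

import Mathlib

open MeasureTheory Filter Set Complex ENNReal

noncomputable section

/-- The open right half-plane `ℂ⁺ = {p : Re p > 0}`. -/
def Cplus : Set ℂ := {p : ℂ | 0 < p.re}

/-- The branch of the square root with `Re √z ≥ 0` (principal power `z^(1/2)`). -/
def sqrtB (z : ℂ) : ℂ := z ^ (1/2 : ℂ)

/-- The root `λ₁(p) = -b/2 - √(μ - ap)`, `μ = b²/4 - c`, of `λ² + bλ + (c + ap) = 0`. -/
def lam1 (a b c : ℝ) (p : ℂ) : ℂ :=
  -(b/2 : ℝ) - sqrtB (((b^2/4 - c : ℝ) : ℂ) - (a : ℂ) * p)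

/-- The root `λ₂(p) = -b/2 + √(μ - ap)`, `μ = b²/4 - c`, of `λ² + bλ + (c + ap) = 0`. -/
def lam2 (a b c : ℝ) (p : ℂ) : ℂ :=
  -(b/2 : ℝ) + sqrtB (((b^2/4 - c : ℝ) : ℂ) - (a : ℂ) * p)

/-- Membership in the Hardy space `H^∞` of the right half-plane: holomorphic and
bounded on `ℂ⁺`. -/
def MemHinf (h : ℂ → ℂ) : Prop :=
  DifferentiableOn ℂ h Cplus ∧ ∃ M : ℝ, ∀ p ∈ Cplus, ‖h p‖ ≤ M

/-- The `H²` norm of a function on the right half-plane: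
`‖h‖_{H²} = sup_{k>0} ‖h(k + i·)‖_{L²(ℝ)}` (as an extended nonnegative real). -/
def eH2Norm (h : ℂ → ℂ) : ℝ≥0∞ :=
  ⨆ k ∈ Set.Ioi (0:ℝ), eLpNorm (fun ω : ℝ => h ((k : ℂ) + (ω : ℂ) * I)) 2 volume

/-- Membership in the Hardy space `H²` of the right half-plane. -/
def MemH2 (h : ℂ → ℂ) : Prop :=
  DifferentiableOn ℂ h Cplus ∧ eH2Norm h < ⊤

/-- The frequency-domain solution `U(x,p) = e^{λ₁(p)x}(k₀ + k₁λ₁(p))⁻¹G(p)` satisfies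
`(∫₀^∞ ‖p^m U(x,·)‖²_{H²} dx)^{1/2} ≤ C₁ ‖p^m G‖_{H²}` for `m = 0, 1`. -/
lemma re_sqrtB_nonneg (z : ℂ) : 0 ≤ (sqrtB z).re := by
  unfold sqrtB
  rcases eq_or_ne z 0 with rfl | hz
  · rw [Complex.zero_cpow (by norm_num)]; simp
  · rw [Complex.cpow_def_of_ne_zero hz, Complex.exp_re]
    refine mul_nonneg (Real.exp_nonneg _) ?_
    have him : (Complex.log z * (1/2 : ℂ)).im = z.arg / 2 := by
      simp [Complex.mul_im, Complex.log_im, Complex.log_re]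
      ring
    rw [him]
    have h1 := Complex.neg_pi_lt_arg z
    have h2 := Complex.arg_le_pi z
    have hpi := Real.pi_pos
    exact Real.cos_nonneg_of_mem_Icc ⟨by linarith, by linarith⟩

lemma re_lam1_le (a b c : ℝ) (p : ℂ) : (lam1 a b c p).re ≤ -(b/2) := by
  unfold lam1
  have := re_sqrtB_nonneg (((b^2/4 - c : ℝ) : ℂ) - (a : ℂ) * p)
  simp only [Complex.sub_re, Complex.neg_re, Complex.ofReal_re]
  linarith

lemma eH2Norm_le_mul (f g : ℂ → ℂ) (K : ℝ) (hK : 0 ≤ K)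
    (h : ∀ p, ‖f p‖ ≤ K * ‖g p‖) :
    eH2Norm f ≤ ENNReal.ofReal K * eH2Norm g := by
  unfold eH2Norm
  refine iSup₂_le fun k hk => ?_
  have step1 : eLpNorm (fun ω : ℝ => f ((k : ℂ) + (ω : ℂ) * I)) 2 volume ≤
      eLpNorm (fun ω : ℝ => (K : ℂ) * g ((k : ℂ) + (ω : ℂ) * I)) 2 volume := by
    refine eLpNorm_mono fun ω => ?_
    calc ‖f ((k : ℂ) + (ω : ℂ) * I)‖ ≤ K * ‖g ((k : ℂ) + (ω : ℂ) * I)‖ := h _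
      _ = ‖(K : ℂ) * g ((k : ℂ) + (ω : ℂ) * I)‖ := by
          rw [norm_mul, Complex.norm_real, Real.norm_of_nonneg hK]
  have step2 : eLpNorm (fun ω : ℝ => (K : ℂ) * g ((k : ℂ) + (ω : ℂ) * I)) 2 volume =
      ENNReal.ofReal K * eLpNorm (fun ω : ℝ => g ((k : ℂ) + (ω : ℂ) * I)) 2 volume := by
    have h' : (fun ω : ℝ => (K : ℂ) * g ((k : ℂ) + (ω : ℂ) * I)) =
        (K : ℂ) • (fun ω : ℝ => g ((k : ℂ) + (ω : ℂ) * I)) := rfl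
    rw [h', eLpNorm_const_smul (K : ℂ) (fun ω : ℝ => g ((k : ℂ) + (ω : ℂ) * I)) 2 volume]
    congr 1
    rw [ENNReal.ofReal]
    congr 1
    rw [← ofReal_norm_eq_enorm, Complex.norm_real, Real.norm_of_nonneg hK]; rfl
  refine step1.trans (step2.le.trans ?_)
  exact mul_le_mul_right (le_iSup₂ (f := fun k (_ : k ∈ Set.Ioi (0:ℝ)) =>
    eLpNorm (fun ω : ℝ => g ((k : ℂ) + (ω : ℂ) * I)) 2 volume) k hk) _

theorem frequency_solution_L2H2_bound'
    (a b c k0 k1 : ℝ) (ha : 0 < a) (hb : 0 < b) (hmu : b ^ 2 / 4 < c)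
    (hk : 0 < k0 ^ 2 + k1 ^ 2) (hkk : k0 * k1 ≤ 0) :
    ∃ C1 : ℝ, 0 ≤ C1 ∧ ∀ G : ℂ → ℂ, MemH2 G → MemH2 (fun p => p * G p) →
      ∀ m : ℕ, m ≤ 1 →
        (∫⁻ x in Set.Ioi (0:ℝ),
            (eH2Norm (fun p => p ^ m * (Complex.exp (lam1 a b c p * (x : ℂ)) *
              ((k0 : ℂ) + (k1 : ℂ) * lam1 a b c p)⁻¹ * G p))) ^ 2) ^ (1/2 : ℝ) ≤
          ENNReal.ofReal C1 * eH2Norm (fun p => p ^ m * G p) := by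
  -- lower bound on the denominator
  set δ : ℝ := if k1 = 0 then |k0| else |k1| * (b/2) with hδdef
  have hδpos : 0 < δ := by
    rw [hδdef]
    split_ifs with h
    · subst h; simp only [ne_eq, pow_two] at hk
      have : k0 ≠ 0 := by intro h0; rw [h0] at hk; norm_num at hk
      exact abs_pos.mpr this
    · exact mul_pos (abs_pos.mpr h) (by linarith)
  have hden : ∀ p : ℂ, δ ≤ ‖(k0 : ℂ) + (k1 : ℂ) * lam1 a b c p‖ := by
    intro p
    have hre : ((k0 : ℂ) + (k1 : ℂ) * lam1 a b c p).re = k0 + k1 * (lam1 a b c p).re := by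
      simp [Complex.add_re, Complex.mul_re]
    have h1 : (lam1 a b c p).re ≤ -(b/2) := re_lam1_le a b c p
    have habs : |((k0 : ℂ) + (k1 : ℂ) * lam1 a b c p).re| ≤
        ‖(k0 : ℂ) + (k1 : ℂ) * lam1 a b c p‖ := Complex.abs_re_le_norm _
    refine le_trans ?_ habs
    rw [hre, hδdef]
    split_ifs with h
    · subst h; simp
    · rcases lt_or_gt_of_ne h with hneg | hpos
      · -- k1 < 0, k0 ≥ 0
        have hk0 : 0 ≤ k0 := by nlinarith
        have : |k1| = -k1 := abs_of_neg hneg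
        rw [this, le_abs]
        left; nlinarith
      · -- k1 > 0, k0 ≤ 0
        have hk0 : k0 ≤ 0 := by nlinarith
        have : |k1| = k1 := abs_of_pos hpos
        rw [this, le_abs]
        right; nlinarith
  set M : ℝ := δ⁻¹ with hMdef
  have hMpos : 0 < M := inv_pos.mpr hδpos
  refine ⟨(M ^ 2 / b) ^ ((1:ℝ)/2), Real.rpow_nonneg (by positivity) _, ?_⟩
  intro G hG hpG m hm
  -- the H² norm of p^m G is finite
  set N : ℝ≥0∞ := eH2Norm (fun p => p ^ m * G p) with hNdef
  have hNfin : N ≠ ⊤ := by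
    interval_cases m
    · have : (fun p : ℂ => p ^ 0 * G p) = G := by funext p; simp
      rw [hNdef, this]; exact hG.2.ne
    · have : (fun p : ℂ => p ^ 1 * G p) = fun p => p * G p := by funext p; simp
      rw [hNdef, this]; exact hpG.2.ne
  -- pointwise bound on the H² norm for each x > 0
  have key : ∀ x : ℝ, 0 ≤ x →
      eH2Norm (fun p => p ^ m * (Complex.exp (lam1 a b c p * (x : ℂ)) *
        ((k0 : ℂ) + (k1 : ℂ) * lam1 a b c p)⁻¹ * G p)) ≤
      ENNReal.ofReal (Real.exp (-(b/2) * x) * M) * N := by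
    intro x hx
    refine eH2Norm_le_mul _ _ _ (by positivity) fun p => ?_
    have heq : p ^ m * (Complex.exp (lam1 a b c p * (x : ℂ)) *
        ((k0 : ℂ) + (k1 : ℂ) * lam1 a b c p)⁻¹ * G p) =
        (Complex.exp (lam1 a b c p * (x : ℂ)) *
        ((k0 : ℂ) + (k1 : ℂ) * lam1 a b c p)⁻¹) * (p ^ m * G p) := by ring
    rw [heq, norm_mul, norm_mul]
    have hexp : ‖Complex.exp (lam1 a b c p * (x : ℂ))‖ ≤ Real.exp (-(b/2) * x) := by
      rw [Complex.norm_exp]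
      apply Real.exp_le_exp.mpr
      have : (lam1 a b c p * (x : ℂ)).re = (lam1 a b c p).re * x := by
        simp [Complex.mul_re]
      rw [this]
      have := re_lam1_le a b c p
      nlinarith
    have hinv : ‖((k0 : ℂ) + (k1 : ℂ) * lam1 a b c p)⁻¹‖ ≤ M := by
      rw [norm_inv, hMdef]
      exact inv_anti₀ hδpos (hden p)
    exact mul_le_mul_of_nonneg_right
      (mul_le_mul hexp hinv (norm_nonneg _) (Real.exp_nonneg _)) (norm_nonneg _)
  -- integrate the bound
  have hint : (∫⁻ x in Set.Ioi (0:ℝ),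
      (eH2Norm (fun p => p ^ m * (Complex.exp (lam1 a b c p * (x : ℂ)) *
        ((k0 : ℂ) + (k1 : ℂ) * lam1 a b c p)⁻¹ * G p))) ^ 2) ≤
      ENNReal.ofReal (M ^ 2 / b) * N ^ 2 := by
    have hmono : (∫⁻ x in Set.Ioi (0:ℝ),
        (eH2Norm (fun p => p ^ m * (Complex.exp (lam1 a b c p * (x : ℂ)) *
          ((k0 : ℂ) + (k1 : ℂ) * lam1 a b c p)⁻¹ * G p))) ^ 2) ≤
        ∫⁻ x in Set.Ioi (0:ℝ),
          ENNReal.ofReal (M ^ 2 * Real.exp (-b * x)) * N ^ 2 := by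
      refine setLIntegral_mono ?_ fun x hx => ?_
      · apply Measurable.mul _ measurable_const
        apply ENNReal.measurable_ofReal.comp
        exact (measurable_const.mul ((measurable_id.const_mul (-b)).exp))
      · have hx0 : (0:ℝ) ≤ x := le_of_lt hx
        calc (eH2Norm (fun p => p ^ m * (Complex.exp (lam1 a b c p * (x : ℂ)) *
              ((k0 : ℂ) + (k1 : ℂ) * lam1 a b c p)⁻¹ * G p))) ^ 2
            ≤ (ENNReal.ofReal (Real.exp (-(b/2) * x) * M) * N) ^ 2 :=
              pow_le_pow_left' (key x hx0) 2
          _ = ENNReal.ofReal (M ^ 2 * Real.exp (-b * x)) * N ^ 2 := by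
              rw [mul_pow, ← ENNReal.ofReal_pow (by positivity)]
              congr 2
              rw [mul_pow, ← Real.exp_nat_mul]
              ring_nf
    refine hmono.trans ?_
    rw [lintegral_mul_const' _ _ (by simp [pow_eq_top_iff, hNfin] : N ^ 2 ≠ ⊤)]
    refine mul_le_mul_left (le_of_eq ?_) _
    rw [← ofReal_integral_eq_lintegral_ofReal]
    · congr 1
      have hsub : ∫ x in Set.Ioi (0:ℝ), M ^ 2 * Real.exp (-b * x) =
          M ^ 2 * ∫ x in Set.Ioi (0:ℝ), Real.exp (-b * x) := by
        rw [integral_const_mul]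
      rw [hsub]
      have : ∫ x in Set.Ioi (0:ℝ), Real.exp (-b * x) = b⁻¹ := by
        have h1 : ∀ x : ℝ, Real.exp (-b * x) = (fun u => Real.exp (-u)) (b * x) := by
          intro x; simp [neg_mul]
        calc ∫ x in Set.Ioi (0:ℝ), Real.exp (-b * x)
            = ∫ x in Set.Ioi (0:ℝ), (fun u => Real.exp (-u)) (b * x) := by
              refine integral_congr_ae (Filter.Eventually.of_forall fun x => h1 x)
          _ = b⁻¹ • ∫ x in Set.Ioi (b * 0), Real.exp (-x) :=
              integral_comp_mul_left_Ioi (fun u => Real.exp (-u)) 0 hb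
          _ = b⁻¹ := by rw [mul_zero, integral_exp_neg_Ioi]; simp
      rw [this]; ring
    · exact (exp_neg_integrableOn_Ioi 0 hb).const_mul _
    · exact Filter.Eventually.of_forall fun x => by positivity
  -- take square roots
  calc (∫⁻ x in Set.Ioi (0:ℝ),
      (eH2Norm (fun p => p ^ m * (Complex.exp (lam1 a b c p * (x : ℂ)) *
        ((k0 : ℂ) + (k1 : ℂ) * lam1 a b c p)⁻¹ * G p))) ^ 2) ^ (1/2 : ℝ)
      ≤ (ENNReal.ofReal (M ^ 2 / b) * N ^ 2) ^ (1/2 : ℝ) :=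
        ENNReal.rpow_le_rpow hint (by norm_num)
    _ = ENNReal.ofReal ((M ^ 2 / b) ^ ((1:ℝ)/2)) * N := by
        rw [ENNReal.mul_rpow_of_nonneg _ _ (by norm_num : (0:ℝ) ≤ 1/2)]
        congr 1
        · rw [ENNReal.ofReal_rpow_of_nonneg (by positivity) (by norm_num)]
        · rw [← ENNReal.rpow_natCast N 2, ← ENNReal.rpow_mul]
          norm_num

theorem frequency_solution_L2H2_bound
    (a b c k0 k1 : ℝ) (ha : 0 < a) (hb : 0 < b) (hmu : b ^ 2 / 4 < c)
    (hk : 0 < k0 ^ 2 + k1 ^ 2) (hkk : k0 * k1 ≤ 0) :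
    ∃ C1 : ℝ, 0 ≤ C1 ∧ ∀ G : ℂ → ℂ, MemH2 G → MemH2 (fun p => p * G p) →
      ∀ m : ℕ, m ≤ 1 →
        (∫⁻ x in Set.Ioi (0:ℝ),
            (eH2Norm (fun p => p ^ m * (Complex.exp (lam1 a b c p * (x : ℂ)) *
              ((k0 : ℂ) + (k1 : ℂ) * lam1 a b c p)⁻¹ * G p))) ^ 2) ^ (1/2 : ℝ) ≤
          ENNReal.ofReal C1 * eH2Norm (fun p => p ^ m * G p) :=
  frequency_solution_L2H2_bound' a b c k0 k1 ha hb hmu hk hkk
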